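/- arXiv:1009.5916 — 3 statements merged into one kernel-verified Lean document; each statement's English description precedes it below -/
import Mathlib

section
/- Let (S_n)_{n≥1} be a sequence of ℝ^d-valued random variables with E[‖S_n‖] < ∞ for all n ≥ 1. Suppose there exist R > 0 and functions λ, L ∈ C_b^1(B(0,R),ℂ) with λ(0) = 1, L(0) = 1, and functions R_n : B(0,R) → ℂ, such that E[e^{i⟨t,S_n⟩}] = λ(t)^n L(t) + R_n(t) for all t ∈ B(0,R) and n ≥ 1, the series Σ_{n≥1} R_n converges uniformly on B(0,R) to a function in C_b^1(B(0,R),ℂ), each R_n is differentiable at 0, and sup_{n≥1} ‖∇R_n(0)‖ < ∞. Then (1/i)∇λ(0) = lim_n (1/n) E[S_n]. -/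
open MeasureTheory Filter Metric
open scoped Topology ENNReal NNReal BigOperators

noncomputable section

abbrev Ed (d : ℕ) : Type := EuclideanSpace ℝ (Fin d)

/-- Membership in `C_b^m(O, ℂ)`. -/
def IsCbm {d : ℕ} (m : ℝ) (O : Set (Ed d)) (U : Ed d → ℂ) : Prop :=
  ContDiffOn ℝ (⌊m⌋₊ : ℕ) U O ∧
  (∀ j : ℕ, j ≤ ⌊m⌋₊ → ∃ C : ℝ, ∀ t ∈ O, ‖iteratedFDerivWithin ℝ j U O t‖ ≤ C) ∧
  ∃ C : ℝ, 0 ≤ C ∧ ∀ t ∈ O, ∀ t' ∈ O,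
    ‖iteratedFDerivWithin ℝ (⌊m⌋₊) U O t - iteratedFDerivWithin ℝ (⌊m⌋₊) U O t'‖
      ≤ C * ‖t - t'‖ ^ (m - (⌊m⌋₊ : ℝ))

/-- The characteristic function `t ↦ E[e^{i⟨t,S_n⟩}]`. -/
def chS {Ω : Type*} [MeasurableSpace Ω] {d : ℕ} (ℙ : Measure Ω) (S : ℕ → Ω → Ed d)
    (n : ℕ) (t : Ed d) : ℂ :=
  ∫ ω, Complex.exp (Complex.I * ((inner ℝ t (S n ω) : ℝ) : ℂ)) ∂ℙ

lemma hasFDerivAt_charInt {d : ℕ} (w : Ed d) (t : Ed d) :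
    HasFDerivAt (fun s : Ed d => Complex.exp (Complex.I * ((inner ℝ s w : ℝ) : ℂ)))
      (Complex.exp (Complex.I * ((inner ℝ t w : ℝ) : ℂ)) •
        (Complex.I • ((Complex.ofRealCLM : ℝ →L[ℝ] ℂ).comp (innerSL ℝ w)))) t := by
  have h1 : HasFDerivAt (fun s : Ed d => (inner ℝ s w : ℝ)) (innerSL ℝ w) t := by
    have := (innerSL ℝ w).hasFDerivAt (x := t)
    have he : (fun s : Ed d => (inner ℝ s w : ℝ)) = fun s : Ed d => innerSL ℝ w s := by
      funext s; rw [innerSL_apply_apply]; exact real_inner_comm w s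
    rw [he]; exact this
  have h2 : HasFDerivAt (fun s : Ed d => ((inner ℝ s w : ℝ) : ℂ))
      ((Complex.ofRealCLM : ℝ →L[ℝ] ℂ).comp (innerSL ℝ w)) t :=
    Complex.ofRealCLM.hasFDerivAt.comp t h1
  exact (h2.const_mul Complex.I).cexp


lemma comp_norm_le {d : ℕ} (w : Ed d) :
    ‖(Complex.I • ((Complex.ofRealCLM : ℝ →L[ℝ] ℂ).comp (innerSL ℝ w)) : Ed d →L[ℝ] ℂ)‖
      ≤ ‖w‖ := by
  refine ContinuousLinearMap.opNorm_le_bound _ (norm_nonneg w) fun v => ?_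
  simp only [ContinuousLinearMap.smul_apply, ContinuousLinearMap.coe_comp',
    Function.comp_apply, innerSL_apply_apply, Complex.ofRealCLM_apply, smul_eq_mul,
    norm_mul, Complex.norm_I, one_mul, Complex.norm_real]
  exact abs_real_inner_le_norm w v

lemma Fp_int {Ω : Type*} [MeasurableSpace Ω] {d : ℕ}
    (ℙ : Measure Ω) [IsProbabilityMeasure ℙ] (X : Ω → Ed d) (hX : Measurable X)
    (hXint : Integrable (fun ω => ‖X ω‖) ℙ) :
    Integrable (fun ω => (Complex.I •
      ((Complex.ofRealCLM : ℝ →L[ℝ] ℂ).comp (innerSL ℝ (X ω)) : Ed d →L[ℝ] ℂ))) ℙ := by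
  have hc : Continuous (fun w : Ed d => (Complex.I •
      ((Complex.ofRealCLM : ℝ →L[ℝ] ℂ).comp (innerSL ℝ w)) : Ed d →L[ℝ] ℂ)) := by
    refine (continuous_const : Continuous fun _ : Ed d => Complex.I).smul ?_
    exact (ContinuousLinearMap.compL ℝ (Ed d) ℝ ℂ Complex.ofRealCLM).continuous.comp
      (innerSL ℝ).continuous
  have hmeas := hc.comp_aestronglyMeasurable (μ := ℙ) hX.aestronglyMeasurable
  exact hXint.mono' hmeas (Eventually.of_forall fun ω => comp_norm_le (X ω))

lemma comp_norm_le' {d : ℕ} (r : ℝ) (w : Ed d) :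
    ‖(Complex.exp (Complex.I * r) •
      (Complex.I • ((Complex.ofRealCLM : ℝ →L[ℝ] ℂ).comp (innerSL ℝ w))) : Ed d →L[ℝ] ℂ)‖
      ≤ ‖w‖ := by
  refine ContinuousLinearMap.opNorm_le_bound _ (norm_nonneg w) fun v => ?_
  simp only [ContinuousLinearMap.smul_apply, ContinuousLinearMap.coe_comp',
    Function.comp_apply, innerSL_apply_apply, Complex.ofRealCLM_apply, smul_eq_mul,
    norm_mul, Complex.norm_I, one_mul, Complex.norm_real,
    Complex.norm_exp]
  have : (Complex.I * (r : ℂ)).re = 0 := by simp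
  rw [this, Real.exp_zero, one_mul]
  exact abs_real_inner_le_norm w v

lemma hasFDerivAt_chS {Ω : Type*} [MeasurableSpace Ω] {d : ℕ}
    (ℙ : Measure Ω) [IsProbabilityMeasure ℙ] (S : ℕ → Ω → Ed d) (hS : ∀ n, Measurable (S n))
    (n : ℕ) (hint : Integrable (fun ω => ‖S n ω‖) ℙ) :
    HasFDerivAt (chS ℙ S n)
      (∫ ω, (Complex.I •
        ((Complex.ofRealCLM : ℝ →L[ℝ] ℂ).comp (innerSL ℝ (S n ω)) : Ed d →L[ℝ] ℂ)) ∂ℙ) 0 := by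
  have hcont : ∀ x : Ed d, Continuous (fun w : Ed d =>
      Complex.exp (Complex.I * ((inner ℝ x w : ℝ) : ℂ))) := by
    intro x
    exact Complex.continuous_exp.comp (continuous_const.mul
      (Complex.continuous_ofReal.comp (innerSL ℝ x).continuous))
  have hcF' : Continuous (fun w : Ed d =>
      (Complex.exp (Complex.I * ((inner ℝ (0 : Ed d) w : ℝ) : ℂ)) •
        (Complex.I • ((Complex.ofRealCLM : ℝ →L[ℝ] ℂ).comp (innerSL ℝ w))) : Ed d →L[ℝ] ℂ)) := by
    refine (hcont 0).smul ?_
    exact (continuous_const : Continuous fun _ : Ed d => Complex.I).smul ((ContinuousLinearMap.compL ℝ (Ed d) ℝ ℂ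
      Complex.ofRealCLM).continuous.comp (innerSL ℝ).continuous)
  have key := hasFDerivAt_integral_of_dominated_of_fderiv_le (𝕜 := ℝ) (μ := ℙ)
    (F := fun t ω => Complex.exp (Complex.I * ((inner ℝ t (S n ω) : ℝ) : ℂ)))
    (F' := fun t ω => Complex.exp (Complex.I * ((inner ℝ t (S n ω) : ℝ) : ℂ)) •
      (Complex.I • ((Complex.ofRealCLM : ℝ →L[ℝ] ℂ).comp (innerSL ℝ (S n ω)))))
    (x₀ := 0) (bound := fun ω => ‖S n ω‖) univ_mem
    (Eventually.of_forall fun x =>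
      (hcont x).comp_aestronglyMeasurable (hS n).aestronglyMeasurable)
    (by
      have : (fun ω => Complex.exp (Complex.I * ((inner ℝ (0 : Ed d) (S n ω) : ℝ) : ℂ)))
          = fun _ => (1 : ℂ) := by
        funext ω; simp
      show Integrable (fun ω =>
        Complex.exp (Complex.I * ((inner ℝ (0 : Ed d) (S n ω) : ℝ) : ℂ))) ℙ
      rw [this]; exact integrable_const 1)
    (hcF'.comp_aestronglyMeasurable (hS n).aestronglyMeasurable)
    (Eventually.of_forall fun ω x _ => comp_norm_le' _ (S n ω))
    hint
    (Eventually.of_forall fun ω x _ => hasFDerivAt_charInt (S n ω) x)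
  have heqF : (∫ ω, (Complex.exp (Complex.I * ((inner ℝ (0 : Ed d) (S n ω) : ℝ) : ℂ)) •
      (Complex.I • ((Complex.ofRealCLM : ℝ →L[ℝ] ℂ).comp (innerSL ℝ (S n ω))))) ∂ℙ)
      = ∫ ω, (Complex.I •
        ((Complex.ofRealCLM : ℝ →L[ℝ] ℂ).comp (innerSL ℝ (S n ω)) : Ed d →L[ℝ] ℂ)) ∂ℙ := by
    refine integral_congr_ae (Eventually.of_forall fun ω => ?_)
    simp
  rw [heqF] at key
  exact key


/-- **Proposition (asymptotic first moment): `(1/i) ∇λ(0) = lim_n (1/n) E[S_n]`.** -/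
theorem asymptotic_first_moment
    {Ω : Type*} [MeasurableSpace Ω] {d : ℕ}
    (ℙ : Measure Ω) [IsProbabilityMeasure ℙ]
    (S : ℕ → Ω → Ed d) (hS : ∀ n, Measurable (S n))
    (hSint : ∀ n : ℕ, 1 ≤ n → Integrable (fun ω => ‖S n ω‖) ℙ)
    (R : ℝ) (hR : 0 < R) (lam L : Ed d → ℂ) (Rn : ℕ → Ed d → ℂ)
    (hlam0 : lam 0 = 1) (hL0 : L 0 = 1)
    (hlamCb : IsCbm 1 (ball 0 R) lam) (hLCb : IsCbm 1 (ball 0 R) L)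
    (heq : ∀ n : ℕ, 1 ≤ n → ∀ t ∈ ball (0 : Ed d) R,
      chS ℙ S n t = lam t ^ n * L t + Rn n t)
    (hunif : TendstoUniformlyOn (fun N t => ∑ n ∈ Finset.range N, Rn (n + 1) t)
      (fun t => ∑' n : ℕ, Rn (n + 1) t) atTop (ball (0 : Ed d) R))
    (hCb : IsCbm 1 (ball 0 R) (fun t => ∑' n : ℕ, Rn (n + 1) t))
    (hdiff : ∀ n : ℕ, 1 ≤ n → DifferentiableAt ℝ (Rn n) 0)
    (hbound : ∃ M : ℝ, ∀ n : ℕ, 1 ≤ n → ‖fderiv ℝ (Rn n) 0‖ ≤ M) :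
    ∀ j : Fin d,
      Tendsto (fun n : ℕ => ((n : ℂ))⁻¹ * ∫ ω, ((S n ω j : ℝ) : ℂ) ∂ℙ) atTop
        (𝓝 (fderiv ℝ lam 0 (EuclideanSpace.single j 1) / Complex.I)) := by
  intro j
  obtain ⟨M, hM⟩ := hbound
  set ej : Ed d := EuclideanSpace.single j 1 with hej
  have h0 : (0 : Ed d) ∈ ball (0 : Ed d) R := mem_ball_self hR
  have hball : ball (0 : Ed d) R ∈ 𝓝 (0 : Ed d) := isOpen_ball.mem_nhds h0
  have hfloor : (⌊(1:ℝ)⌋₊ : ℕ) = 1 := Nat.floor_one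
  have hlamD : DifferentiableAt ℝ lam 0 := by
    have h := hlamCb.1
    rw [hfloor] at h
    exact (h.contDiffAt hball).differentiableAt (by norm_num)
  have hLD : DifferentiableAt ℝ L 0 := by
    have h := hLCb.1
    rw [hfloor] at h
    exact (h.contDiffAt hball).differentiableAt (by norm_num)
  set A : ℂ := fderiv ℝ lam 0 ej with hA
  set B : ℂ := fderiv ℝ L 0 ej with hB
  set r : ℕ → ℂ := fun n => fderiv ℝ (Rn n) 0 ej with hr
  -- derivative of lam^n at 0
  have hpow : ∀ n : ℕ, HasFDerivAt (fun t => lam t ^ n) ((n : ℂ) • fderiv ℝ lam 0) 0 := by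
    intro n
    induction n with
    | zero =>
      have h0' : HasFDerivAt (fun _ : Ed d => (1:ℂ)) (0 : Ed d →L[ℝ] ℂ) 0 :=
        hasFDerivAt_const (1 : ℂ) (0 : Ed d)
      simp only [pow_zero, Nat.cast_zero]
      exact h0'.congr_fderiv (by ext v; simp)
    | succ m ih =>
      have h2 := ih.mul hlamD.hasFDerivAt
      have h3 : HasFDerivAt (fun t => lam t ^ (m + 1))
          (lam 0 ^ m • fderiv ℝ lam 0 + lam 0 • ((m : ℂ) • fderiv ℝ lam 0)) 0 := by
        have he : (fun t => lam t ^ (m + 1)) = (fun t => lam t ^ m) * lam := by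
          funext t; simp [pow_succ]
        rw [he]; exact h2
      convert h3 using 1
      rw [hlam0]
      simp [add_smul, smul_smul]
      ext v
      simp only [ContinuousLinearMap.smul_apply, ContinuousLinearMap.add_apply, smul_eq_mul]
      ring
  -- key identity for each n ≥ 1
  have key : ∀ n : ℕ, 1 ≤ n →
      ((n : ℂ))⁻¹ * ∫ ω, ((S n ω j : ℝ) : ℂ) ∂ℙ
        = A / Complex.I + ((n : ℂ))⁻¹ * ((B + r n) / Complex.I) := by
    intro n hn
    have hint := hSint n hn
    have hchS1 := hasFDerivAt_chS ℙ S hS n hint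
    have hrhsD : HasFDerivAt (fun t => lam t ^ n * L t + Rn n t)
        ((lam 0 ^ n • fderiv ℝ L 0 + L 0 • ((n : ℂ) • fderiv ℝ lam 0)) + fderiv ℝ (Rn n) 0) 0 :=
      ((hpow n).mul hLD.hasFDerivAt).add (hdiff n hn).hasFDerivAt
    have hEq : chS ℙ S n =ᶠ[𝓝 (0 : Ed d)] fun t => lam t ^ n * L t + Rn n t := by
      filter_upwards [hball] with t ht using heq n hn t ht
    have hchS2 : HasFDerivAt (chS ℙ S n)
        ((lam 0 ^ n • fderiv ℝ L 0 + L 0 • ((n : ℂ) • fderiv ℝ lam 0)) + fderiv ℝ (Rn n) 0) 0 :=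
      hrhsD.congr_of_eventuallyEq hEq
    have huniq := hchS1.unique hchS2
    have hIA := congrArg (fun T : Ed d →L[ℝ] ℂ => T ej) huniq
    simp only at hIA
    -- left side: evaluate the integral of the CLM-valued function
    have hFint := Fp_int ℙ (S n) (hS n) hint
    rw [ContinuousLinearMap.integral_apply hFint ej] at hIA
    have hval : ∀ ω, (Complex.I •
        ((Complex.ofRealCLM : ℝ →L[ℝ] ℂ).comp (innerSL ℝ (S n ω)) : Ed d →L[ℝ] ℂ)) ej
        = Complex.I * ((S n ω j : ℝ) : ℂ) := by
      intro ω
      simp [hej, smul_eq_mul, real_inner_comm, EuclideanSpace.inner_single_left,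
        EuclideanSpace.inner_single_right]
    simp only [hval] at hIA
    rw [integral_const_mul] at hIA
    -- right side
    have hrhs : (((lam 0 ^ n • fderiv ℝ L 0 + L 0 • ((n : ℂ) • fderiv ℝ lam 0))
        + fderiv ℝ (Rn n) 0) : Ed d →L[ℝ] ℂ) ej = (n : ℂ) * A + B + r n := by
      rw [hlam0, hL0]
      simp [hA, hB, hr, smul_eq_mul]
      ring
    rw [hrhs] at hIA
    -- now hIA : I * ∫ = n * A + B + r n
    have hn' : (n : ℂ) ≠ 0 := Nat.cast_ne_zero.mpr (by omega)
    have hInt : (∫ ω, ((S n ω j : ℝ) : ℂ) ∂ℙ) = ((n : ℂ) * A + B + r n) / Complex.I := by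
      rw [eq_div_iff Complex.I_ne_zero]
      linear_combination hIA
    rw [hInt]
    field_simp
    ring
  -- limit of the error term
  have hterm : Tendsto (fun n : ℕ => ((n : ℂ))⁻¹ * ((B + r n) / Complex.I)) atTop (𝓝 0) := by
    refine squeeze_zero_norm' (a := fun n : ℕ => (‖B‖ + M) / n) ?_ ?_
    · filter_upwards [eventually_ge_atTop 1] with n hn
      have h1 : ‖r n‖ ≤ M := by
        calc ‖r n‖ ≤ ‖fderiv ℝ (Rn n) 0‖ * ‖ej‖ := (fderiv ℝ (Rn n) 0).le_opNorm ej
          _ = ‖fderiv ℝ (Rn n) 0‖ := by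
              simp [hej, EuclideanSpace.norm_single]
          _ ≤ M := hM n hn
      have h2 : ‖B + r n‖ ≤ ‖B‖ + M := le_trans (norm_add_le _ _) (by linarith)
      calc ‖((n : ℂ))⁻¹ * ((B + r n) / Complex.I)‖
          = ((n : ℝ))⁻¹ * ‖B + r n‖ := by
            simp [norm_mul, norm_div]
        _ ≤ ((n : ℝ))⁻¹ * (‖B‖ + M) := by
            gcongr
        _ = (‖B‖ + M) / n := by ring
    · exact tendsto_const_div_atTop_nhds_zero_nat _
  have hlim : Tendsto (fun n : ℕ => A / Complex.I + ((n : ℂ))⁻¹ * ((B + r n) / Complex.I))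
      atTop (𝓝 (A / Complex.I)) := by
    simpa using tendsto_const_nhds.add hterm
  exact hlim.congr' (by
    filter_upwards [eventually_ge_atTop 1] with n hn
    exact (key n hn).symm)
end
end

section
/- Let (S_n)_{n≥1} be a sequence of ℝ^d-valued random variables with E[‖S_n‖²] < ∞ for all n ≥ 1. Suppose there exist R > 0 and functions λ, L ∈ C_b^2(B(0,R),ℂ) with λ(0) = 1, L(0) = 1, and functions R_n : B(0,R) → ℂ, such that E[e^{i⟨t,S_n⟩}] = λ(t)^n L(t) + R_n(t) for all t ∈ B(0,R) and n ≥ 1, the series Σ_{n≥1} R_n converges uniformly on B(0,R) to a function in C_b^2(B(0,R),ℂ), each R_n is twice differentiable at 0 with sup_{n≥1} of the norms of the second-order derivatives of R_n at 0 finite, and in addition ∇λ(0) = 0. Then −Hess λ(0) = lim_n (1/n) E[S_n S_n^*], where S_n S_n^* denotes the d×d matrix with entries (S_n)_j (S_n)_k. -/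
open MeasureTheory Filter Metric
open scoped Topology ENNReal NNReal BigOperators

noncomputable section

namespace AsymCov
set_option synthInstance.maxHeartbeats 1000000

variable {d : ℕ}

def Kc (x : Ed d) : Ed d →L[ℝ] ℂ := Complex.ofRealCLM.comp (innerSL ℝ x)

lemma Kc_apply (x t : Ed d) : Kc x t = ((inner ℝ x t : ℝ) : ℂ) := rfl

lemma norm_Kc_le (x : Ed d) : ‖Kc x‖ ≤ ‖x‖ := by
  refine ContinuousLinearMap.opNorm_le_bound _ (norm_nonneg x) fun u => ?_
  rw [Kc_apply, Complex.norm_real, Real.norm_eq_abs]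
  exact abs_real_inner_le_norm x u

lemma norm_exp_I_mul (x t : Ed d) : ‖Complex.exp (Complex.I * Kc x t)‖ = 1 := by
  rw [Kc_apply, Complex.norm_exp]
  simp

def Fd1 (t x : Ed d) : Ed d →L[ℝ] ℂ :=
  (Complex.exp (Complex.I * Kc x t) * Complex.I) • Kc x

def Fd2 (t x : Ed d) : Ed d →L[ℝ] (Ed d →L[ℝ] ℂ) :=
  ((-(Complex.exp (Complex.I * Kc x t))) • Kc x).smulRight (Kc x)

lemma hasFDerivAt_exp_inner (x t : Ed d) :
    HasFDerivAt (fun s => Complex.exp (Complex.I * Kc x s)) (Fd1 t x) t := by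
  have h1 : HasFDerivAt (fun s => Complex.I * Kc x s) (Complex.I • Kc x) t :=
    (Kc x).hasFDerivAt.const_mul Complex.I
  have := h1.cexp
  rwa [smul_smul] at this

lemma hasFDerivAt_Fd1 (x t : Ed d) :
    HasFDerivAt (fun s => Fd1 s x) (Fd2 t x) t := by
  have h1 : HasFDerivAt (fun s => Complex.exp (Complex.I * Kc x s) * Complex.I)
      (Complex.I • Fd1 t x) t := (hasFDerivAt_exp_inner x t).mul_const Complex.I
  have h2 := h1.smul_const (Kc x)
  have : Complex.I • Fd1 t x = (-(Complex.exp (Complex.I * Kc x t))) • Kc x := by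
    rw [Fd1, smul_smul]
    congr 1
    rw [mul_comm]
    rw [mul_assoc, Complex.I_mul_I]
    ring
  rwa [this] at h2

lemma norm_Kc_apply_le (x u : Ed d) : ‖Kc x u‖ ≤ ‖x‖ * ‖u‖ := by
  rw [Kc_apply, Complex.norm_real, Real.norm_eq_abs]
  exact abs_real_inner_le_norm x u

lemma norm_Fd1_le (t x : Ed d) : ‖Fd1 t x‖ ≤ ‖x‖ := by
  refine ContinuousLinearMap.opNorm_le_bound _ (norm_nonneg x) fun u => ?_
  have : Fd1 t x u = (Complex.exp (Complex.I * Kc x t) * Complex.I) * Kc x u := rfl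
  rw [this, norm_mul, norm_mul, norm_exp_I_mul, Complex.norm_I, one_mul, one_mul]
  exact norm_Kc_apply_le x u

lemma norm_Fd2_le (t x : Ed d) : ‖Fd2 t x‖ ≤ ‖x‖ ^ 2 := by
  refine ContinuousLinearMap.opNorm_le_bound _ (by positivity) fun u => ?_
  refine ContinuousLinearMap.opNorm_le_bound _ (by positivity) fun v => ?_
  have : Fd2 t x u v = (-(Complex.exp (Complex.I * Kc x t)) * Kc x u) * Kc x v := rfl
  rw [this, norm_mul, norm_mul, norm_neg, norm_exp_I_mul, one_mul]
  have h1 := norm_Kc_apply_le x u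
  have h2 := norm_Kc_apply_le x v
  have := norm_nonneg (Kc x u)
  have := norm_nonneg (Kc x v)
  have := norm_nonneg u
  have := norm_nonneg v
  have := norm_nonneg x
  nlinarith

lemma continuous_Kc_apply (t : Ed d) : Continuous fun x : Ed d => Kc x t := by
  simp only [Kc_apply]
  exact Complex.continuous_ofReal.comp (continuous_id.inner continuous_const)

lemma continuous_Fd1 (t : Ed d) : Continuous fun x : Ed d => Fd1 t x := by
  rw [continuous_clm_apply]
  intro u
  simp only [Fd1, ContinuousLinearMap.smul_apply, smul_eq_mul]
  exact (((Complex.continuous_exp.comp ((continuous_const).mul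
    (continuous_Kc_apply t))).mul continuous_const).mul (continuous_Kc_apply u))

lemma continuous_Fd2 (t : Ed d) : Continuous fun x : Ed d => Fd2 t x := by
  rw [continuous_clm_apply]
  intro u
  rw [continuous_clm_apply]
  intro v
  simp only [Fd2, ContinuousLinearMap.smulRight_apply, ContinuousLinearMap.smul_apply,
    ContinuousLinearMap.neg_apply, smul_eq_mul]
  apply Continuous.mul
  · exact (((Complex.continuous_exp.comp ((continuous_const).mul
      (continuous_Kc_apply t))).neg).mul (continuous_Kc_apply u))
  · exact continuous_Kc_apply v


variable {Ω : Type*} [MeasurableSpace Ω] (ℙ : Measure Ω) [IsProbabilityMeasure ℙ]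

lemma sq_bound (x : Ed d) : ‖x‖ ≤ 1 + ‖x‖ ^ 2 := by nlinarith [sq_nonneg (‖x‖ - 1), norm_nonneg x]

lemma hasFDerivAt_int1 (X : Ω → Ed d) (hX : Measurable X)
    (hXint : Integrable (fun ω => ‖X ω‖ ^ 2) ℙ) (t₀ : Ed d) :
    HasFDerivAt (fun t => ∫ ω, Complex.exp (Complex.I * Kc (X ω) t) ∂ℙ)
      (∫ ω, Fd1 t₀ (X ω) ∂ℙ) t₀ := by
  have hAE : AEStronglyMeasurable X ℙ := hX.aestronglyMeasurable
  have hbound : Integrable (fun ω => 1 + ‖X ω‖ ^ 2) ℙ := (integrable_const 1).add hXint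
  refine hasFDerivAt_integral_of_dominated_of_fderiv_le (𝕜 := ℝ) (s := ball t₀ 1)
    (F := fun t ω => Complex.exp (Complex.I * Kc (X ω) t)) (F' := fun t ω => Fd1 t (X ω))
    (bound := fun ω => 1 + ‖X ω‖ ^ 2) (ball_mem_nhds t₀ one_pos) ?_ ?_ ?_ ?_ hbound ?_
  · refine Eventually.of_forall fun t => ?_
    exact (Complex.continuous_exp.comp (continuous_const.mul
      (continuous_Kc_apply t))).comp_aestronglyMeasurable hAE
  · refine hbound.mono' ((Complex.continuous_exp.comp (continuous_const.mul
      (continuous_Kc_apply t₀))).comp_aestronglyMeasurable hAE) ?_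
    refine Eventually.of_forall fun ω => ?_
    have := norm_exp_I_mul (X ω) t₀
    show ‖Complex.exp (Complex.I * Kc (X ω) t₀)‖ ≤ 1 + ‖X ω‖ ^ 2
    rw [this]
    nlinarith [sq_nonneg ‖X ω‖]
  · exact (continuous_Fd1 t₀).comp_aestronglyMeasurable hAE
  · refine Eventually.of_forall fun ω => fun t _ => ?_
    exact (norm_Fd1_le t (X ω)).trans (sq_bound (X ω))
  · exact Eventually.of_forall fun ω => fun t _ => hasFDerivAt_exp_inner (X ω) t

lemma hasFDerivAt_int2 (X : Ω → Ed d) (hX : Measurable X)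
    (hXint : Integrable (fun ω => ‖X ω‖ ^ 2) ℙ) :
    HasFDerivAt (fun t => ∫ ω, Fd1 t (X ω) ∂ℙ) (∫ ω, Fd2 0 (X ω) ∂ℙ) 0 := by
  have hAE : AEStronglyMeasurable X ℙ := hX.aestronglyMeasurable
  have hbound : Integrable (fun ω => 1 + ‖X ω‖ ^ 2) ℙ := (integrable_const 1).add hXint
  refine hasFDerivAt_integral_of_dominated_of_fderiv_le (𝕜 := ℝ) (s := ball 0 1)
    (F := fun t ω => Fd1 t (X ω)) (F' := fun t ω => Fd2 t (X ω))
    (bound := fun ω => 1 + ‖X ω‖ ^ 2) (ball_mem_nhds 0 one_pos) ?_ ?_ ?_ ?_ hbound ?_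
  · refine Eventually.of_forall fun t => ?_
    exact (continuous_Fd1 t).comp_aestronglyMeasurable hAE
  · refine hbound.mono' ((continuous_Fd1 0).comp_aestronglyMeasurable hAE) ?_
    refine Eventually.of_forall fun ω => ?_
    exact (norm_Fd1_le 0 (X ω)).trans (sq_bound (X ω))
  · exact (continuous_Fd2 0).comp_aestronglyMeasurable hAE
  · refine Eventually.of_forall fun ω => fun t _ => ?_
    refine (norm_Fd2_le t (X ω)).trans ?_
    show ‖X ω‖ ^ 2 ≤ 1 + ‖X ω‖ ^ 2
    linarith
  · exact Eventually.of_forall fun ω => fun t _ => hasFDerivAt_Fd1 (X ω) t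

lemma chS_eq (X : Ω → Ed d) :
    (fun t => ∫ ω, Complex.exp (Complex.I * ((inner ℝ t (X ω) : ℝ) : ℂ)) ∂ℙ)
      = fun t => ∫ ω, Complex.exp (Complex.I * Kc (X ω) t) ∂ℙ := by
  funext t
  congr 1
  funext ω
  rw [Kc_apply, real_inner_comm]

lemma fderiv2_chS (X : Ω → Ed d) (hX : Measurable X)
    (hXint : Integrable (fun ω => ‖X ω‖ ^ 2) ℙ) (u v : Ed d) :
    fderiv ℝ (fderiv ℝ (fun t => ∫ ω, Complex.exp (Complex.I * ((inner ℝ t (X ω) : ℝ) : ℂ)) ∂ℙ)) 0 u v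
      = -∫ ω, (((inner ℝ (X ω) u : ℝ) * (inner ℝ (X ω) v : ℝ) : ℝ) : ℂ) ∂ℙ := by
  rw [chS_eq]
  have h1 : fderiv ℝ (fun t => ∫ ω, Complex.exp (Complex.I * Kc (X ω) t) ∂ℙ)
      = fun t => ∫ ω, Fd1 t (X ω) ∂ℙ :=
    funext fun t => (hasFDerivAt_int1 ℙ X hX hXint t).fderiv
  rw [h1, (hasFDerivAt_int2 ℙ X hX hXint).fderiv]
  have hAE : AEStronglyMeasurable X ℙ := hX.aestronglyMeasurable
  have hbound : Integrable (fun ω => 1 + ‖X ω‖ ^ 2) ℙ := (integrable_const 1).add hXint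
  letI : ContinuousENorm (Ed d →L[ℝ] Ed d →L[ℝ] ℂ) :=
    @SeminormedAddGroup.toContinuousENorm (Ed d →L[ℝ] Ed d →L[ℝ] ℂ) _
  have hint2 : Integrable (fun ω => Fd2 0 (X ω)) ℙ := by
    refine hbound.mono' (f := fun ω => Fd2 0 (X ω)) ((continuous_Fd2 0).comp_aestronglyMeasurable hAE) ?_
    refine Eventually.of_forall fun ω => ?_
    refine (norm_Fd2_le 0 (X ω)).trans ?_
    show ‖X ω‖ ^ 2 ≤ 1 + ‖X ω‖ ^ 2
    linarith
  rw [ContinuousLinearMap.integral_apply hint2,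
    ContinuousLinearMap.integral_apply (hint2.apply_continuousLinearMap u), ← integral_neg]
  congr 1
  funext ω
  have h0 : Kc (X ω) 0 = 0 := by rw [Kc_apply]; simp
  have : Fd2 0 (X ω) u v
      = (-(Complex.exp (Complex.I * Kc (X ω) 0)) * Kc (X ω) u) * Kc (X ω) v := rfl
  rw [this, h0, mul_zero, Complex.exp_zero, Kc_apply, Kc_apply]
  push_cast
  ring

lemma differentiableAt_chS (X : Ω → Ed d) (hX : Measurable X)
    (hXint : Integrable (fun ω => ‖X ω‖ ^ 2) ℙ) (t : Ed d) :
    DifferentiableAt ℝ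
      (fun t => ∫ ω, Complex.exp (Complex.I * ((inner ℝ t (X ω) : ℝ) : ℂ)) ∂ℙ) t := by
  rw [chS_eq]
  exact (hasFDerivAt_int1 ℙ X hX hXint t).differentiableAt


lemma smulRight_zero' (c : Ed d →L[ℝ] ℂ) :
    c.smulRight (0 : Ed d →L[ℝ] ℂ) = 0 := by
  ext u; simp

lemma zero_smulRight' (f : Ed d →L[ℝ] ℂ) :
    (0 : Ed d →L[ℝ] ℂ).smulRight f = 0 := by
  ext u; simp

lemma fderiv2_pow_mul {lam L : Ed d → ℂ} (hlam : ContDiffAt ℝ 2 lam 0) (hL : ContDiffAt ℝ 2 L 0)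
    (hlam0 : lam 0 = 1) (hL0 : L 0 = 1) (hgrad : fderiv ℝ lam 0 = 0) (n : ℕ) :
    DifferentiableAt ℝ (fderiv ℝ (fun t => lam t ^ n * L t)) 0 ∧
    fderiv ℝ (fderiv ℝ (fun t => lam t ^ n * L t)) 0 =
      fderiv ℝ (fderiv ℝ L) 0 + (n : ℂ) • fderiv ℝ (fderiv ℝ lam) 0 := by
  have h2 : (1 : WithTop ℕ∞) + 1 ≤ 2 := by norm_num
  have hlamD : DifferentiableAt ℝ lam 0 := hlam.differentiableAt two_ne_zero
  have hLD : DifferentiableAt ℝ L 0 := hL.differentiableAt two_ne_zero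
  have hlam'D : DifferentiableAt ℝ (fderiv ℝ lam) 0 :=
    (hlam.fderiv_right h2).differentiableAt one_ne_zero
  have hL'D : DifferentiableAt ℝ (fderiv ℝ L) 0 :=
    (hL.fderiv_right h2).differentiableAt one_ne_zero
  set Q : Ed d → (Ed d →L[ℝ] ℂ) := fun t =>
    (lam t ^ n) • fderiv ℝ L t + (L t * (n * lam t ^ (n - 1))) • fderiv ℝ lam t with hQ
  have hev : ∀ᶠ t in 𝓝 (0 : Ed d), DifferentiableAt ℝ lam t ∧ DifferentiableAt ℝ L t := by
    filter_upwards [hlam.eventually (by norm_num), hL.eventually (by norm_num)] with t h1 h2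
    exact ⟨h1.differentiableAt two_ne_zero, h2.differentiableAt two_ne_zero⟩
  have hPQ : fderiv ℝ (fun t => lam t ^ n * L t) =ᶠ[𝓝 (0 : Ed d)] Q := by
    filter_upwards [hev] with t ht
    have hpow : HasFDerivAt (fun s => lam s ^ n)
        ((n * lam t ^ (n - 1)) • fderiv ℝ lam t) t :=
      (hasDerivAt_pow n (lam t)).comp_hasFDerivAt t ht.1.hasFDerivAt
    have hmul : HasFDerivAt (fun s => lam s ^ n * L s) _ t := hpow.mul ht.2.hasFDerivAt
    rw [hmul.fderiv, hQ]
    rw [smul_smul]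
  -- derivative of Q at 0
  have c1 : HasFDerivAt (fun s => lam s ^ n) (0 : Ed d →L[ℝ] ℂ) 0 := by
    have h0 : HasFDerivAt lam (0 : Ed d →L[ℝ] ℂ) 0 := hgrad ▸ hlamD.hasFDerivAt
    have := (hasDerivAt_pow n (lam 0)).comp_hasFDerivAt 0 h0
    exact this.congr_fderiv (by ext u; simp)
  have t1 := c1.smul hL'D.hasFDerivAt
  have c2 : HasFDerivAt (fun s => L s * (n * lam s ^ (n - 1)))
      (fderiv ℝ (fun s => L s * (n * lam s ^ (n - 1))) 0) 0 := by
    have hpow : DifferentiableAt ℝ (fun s => lam s ^ (n - 1)) 0 := by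
      have := (hasDerivAt_pow (n - 1) (lam 0)).comp_hasFDerivAt 0 hlamD.hasFDerivAt
      exact this.differentiableAt
    exact (hLD.mul ((differentiableAt_const _).mul hpow)).hasFDerivAt
  have t2 := c2.smul hlam'D.hasFDerivAt
  have hsum := t1.add t2
  have hQD : HasFDerivAt Q
      (fderiv ℝ (fderiv ℝ L) 0 + (n : ℂ) • fderiv ℝ (fderiv ℝ lam) 0) 0 := by
    have heq : (lam 0 ^ n • fderiv ℝ (fderiv ℝ L) 0
          + ContinuousLinearMap.smulRight (0 : Ed d →L[ℝ] ℂ) (fderiv ℝ L 0))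
        + ((L 0 * (↑n * lam 0 ^ (n - 1))) • fderiv ℝ (fderiv ℝ lam) 0
          + ContinuousLinearMap.smulRight
              (fderiv ℝ (fun s => L s * (n * lam s ^ (n - 1))) 0) (fderiv ℝ lam 0))
        = fderiv ℝ (fderiv ℝ L) 0 + (n : ℂ) • fderiv ℝ (fderiv ℝ lam) 0 := by
      rw [hgrad, smulRight_zero', zero_smulRight', hlam0, hL0]
      simp
    rw [← heq]
    exact hsum
  constructor
  · exact hQD.differentiableAt.congr_of_eventuallyEq hPQ
  · rw [hPQ.fderiv_eq, hQD.fderiv]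


end AsymCov

open AsymCov

/-- **Proposition (asymptotic covariance): `−Hess λ(0) = lim_n (1/n) E[S_n S_n^*]`.** -/
theorem asymptotic_covariance
    {Ω : Type*} [MeasurableSpace Ω] {d : ℕ}
    (ℙ : Measure Ω) [IsProbabilityMeasure ℙ]
    (S : ℕ → Ω → Ed d) (hS : ∀ n, Measurable (S n))
    (hSint : ∀ n : ℕ, 1 ≤ n → Integrable (fun ω => ‖S n ω‖ ^ 2) ℙ)
    (R : ℝ) (hR : 0 < R) (lam L : Ed d → ℂ) (Rn : ℕ → Ed d → ℂ)
    (hlam0 : lam 0 = 1) (hL0 : L 0 = 1)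
    (hlamCb : IsCbm 2 (ball 0 R) lam) (hLCb : IsCbm 2 (ball 0 R) L)
    (heq : ∀ n : ℕ, 1 ≤ n → ∀ t ∈ ball (0 : Ed d) R,
      chS ℙ S n t = lam t ^ n * L t + Rn n t)
    (hunif : TendstoUniformlyOn (fun N t => ∑ n ∈ Finset.range N, Rn (n + 1) t)
      (fun t => ∑' n : ℕ, Rn (n + 1) t) atTop (ball (0 : Ed d) R))
    (hCb : IsCbm 2 (ball 0 R) (fun t => ∑' n : ℕ, Rn (n + 1) t))
    (hdiff1 : ∀ n : ℕ, 1 ≤ n → DifferentiableAt ℝ (Rn n) 0)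
    (hdiff2 : ∀ n : ℕ, 1 ≤ n → DifferentiableAt ℝ (fderiv ℝ (Rn n)) 0)
    (hbound : ∃ M : ℝ, ∀ n : ℕ, 1 ≤ n → ‖fderiv ℝ (fderiv ℝ (Rn n)) 0‖ ≤ M)
    (hgrad : fderiv ℝ lam 0 = 0) :
    ∀ j k : Fin d,
      Tendsto (fun n : ℕ => ((n : ℂ))⁻¹ * ∫ ω, ((S n ω j * S n ω k : ℝ) : ℂ) ∂ℙ) atTop
        (𝓝 (-(iteratedFDeriv ℝ 2 lam 0
          ![EuclideanSpace.single j 1, EuclideanSpace.single k 1]))) := by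
  intro j k
  obtain ⟨M, hM⟩ := hbound
  set u : Ed d := EuclideanSpace.single j (1 : ℝ) with hu
  set v : Ed d := EuclideanSpace.single k (1 : ℝ) with hv
  have hfloor : (⌊(2 : ℝ)⌋₊ : ℕ) = 2 := by norm_num
  have hlamOn : ContDiffOn ℝ 2 lam (ball 0 R) := by
    have := hlamCb.1; rw [hfloor] at this; exact_mod_cast this
  have hLOn : ContDiffOn ℝ 2 L (ball 0 R) := by
    have := hLCb.1; rw [hfloor] at this; exact_mod_cast this
  have hball0 : ball (0 : Ed d) R ∈ 𝓝 (0 : Ed d) := ball_mem_nhds 0 hR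
  have hlamA : ContDiffAt ℝ 2 lam 0 := hlamOn.contDiffAt hball0
  have hLA : ContDiffAt ℝ 2 L 0 := hLOn.contDiffAt hball0
  set a : ℂ := fderiv ℝ (fderiv ℝ L) 0 u v with ha
  set c : ℂ := fderiv ℝ (fderiv ℝ lam) 0 u v with hc
  -- the key identity for `n ≥ 1`
  have key : ∀ n : ℕ, 1 ≤ n →
      (∫ ω, ((S n ω j * S n ω k : ℝ) : ℂ) ∂ℙ)
        = -a - (n : ℂ) * c - fderiv ℝ (fderiv ℝ (Rn n)) 0 u v := by
    intro n hn
    have hch : chS ℙ S n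
        = fun t => ∫ ω, Complex.exp (Complex.I * ((inner ℝ t (S n ω) : ℝ) : ℂ)) ∂ℙ := rfl
    set P : Ed d → ℂ := fun t => lam t ^ n * L t with hP
    have hPdiff : ∀ t ∈ ball (0 : Ed d) R, DifferentiableAt ℝ P t := by
      intro t ht
      have h1 := (hlamOn.contDiffAt (isOpen_ball.mem_nhds ht)).differentiableAt two_ne_zero
      have h2 := (hLOn.contDiffAt (isOpen_ball.mem_nhds ht)).differentiableAt two_ne_zero
      have hp : DifferentiableAt ℝ (fun s => lam s ^ n) t :=
        ((hasDerivAt_pow n (lam t)).comp_hasFDerivAt t h1.hasFDerivAt).differentiableAt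
      exact hp.mul h2
    have hchdiff : ∀ t, DifferentiableAt ℝ (chS ℙ S n) t := by
      intro t
      rw [hch]
      exact differentiableAt_chS ℙ (S n) (hS n) (hSint n hn) t
    have hfd : ∀ t ∈ ball (0 : Ed d) R,
        fderiv ℝ (chS ℙ S n) t = fderiv ℝ P t + fderiv ℝ (Rn n) t := by
      intro t ht
      have hev : Rn n =ᶠ[𝓝 t] fun s => chS ℙ S n s - P s := by
        filter_upwards [isOpen_ball.mem_nhds ht] with s hs
        rw [heq n hn s hs]; ring
      rw [hev.fderiv_eq, fderiv_fun_sub (hchdiff t) (hPdiff t ht)]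
      abel
    have hfe : fderiv ℝ (chS ℙ S n) =ᶠ[𝓝 (0 : Ed d)]
        fun t => fderiv ℝ P t + fderiv ℝ (Rn n) t := by
      filter_upwards [hball0] with t ht using hfd t ht
    obtain ⟨hPdiff2, hPform⟩ := fderiv2_pow_mul hlamA hLA hlam0 hL0 hgrad n
    have h2nd : fderiv ℝ (fderiv ℝ (chS ℙ S n)) 0
        = (fderiv ℝ (fderiv ℝ L) 0 + (n : ℂ) • fderiv ℝ (fderiv ℝ lam) 0)
          + fderiv ℝ (fderiv ℝ (Rn n)) 0 := by
      rw [hfe.fderiv_eq, fderiv_fun_add hPdiff2 (hdiff2 n hn), hPform]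
    have hA := fderiv2_chS ℙ (S n) (hS n) (hSint n hn) u v
    rw [← hch, h2nd] at hA
    have hju : ∀ ω, (inner ℝ (S n ω) u : ℝ) = S n ω j := by
      intro ω; rw [hu]; simp [EuclideanSpace.inner_single_right]
    have hkv : ∀ ω, (inner ℝ (S n ω) v : ℝ) = S n ω k := by
      intro ω; rw [hv]; simp [EuclideanSpace.inner_single_right]
    simp only [hju, hkv, ContinuousLinearMap.add_apply, ContinuousLinearMap.smul_apply,
      smul_eq_mul] at hA
    rw [← ha, ← hc] at hA
    have := hA.symm
    linear_combination -this
  -- pass to the limit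
  have hiter : iteratedFDeriv ℝ 2 lam 0 ![u, v] = c := by
    rw [iteratedFDeriv_two_apply]
    simp [hc]
  rw [hiter]
  have hgb : ∀ n : ℕ, 1 ≤ n → ‖fderiv ℝ (fderiv ℝ (Rn n)) 0 u v‖ ≤ M := by
    intro n hn
    have h1 : ‖fderiv ℝ (fderiv ℝ (Rn n)) 0 u v‖
        ≤ ‖fderiv ℝ (fderiv ℝ (Rn n)) 0 u‖ * ‖v‖ :=
      ContinuousLinearMap.le_opNorm _ v
    have h2 : ‖fderiv ℝ (fderiv ℝ (Rn n)) 0 u‖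
        ≤ ‖fderiv ℝ (fderiv ℝ (Rn n)) 0‖ * ‖u‖ :=
      ContinuousLinearMap.le_opNorm _ u
    have hnu : ‖u‖ = 1 := by rw [hu]; simp
    have hnv : ‖v‖ = 1 := by rw [hv]; simp
    rw [hnv] at h1; rw [hnu] at h2
    simpa using h1.trans (by simpa using h2.trans (by simpa using hM n hn))
  have hdiffe : ∀ᶠ n : ℕ in atTop,
      ((n : ℂ))⁻¹ * (∫ ω, ((S n ω j * S n ω k : ℝ) : ℂ) ∂ℙ) - (-c)
        = ((n : ℂ))⁻¹ * (-a - fderiv ℝ (fderiv ℝ (Rn n)) 0 u v) := by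
    filter_upwards [eventually_ge_atTop 1] with n hn
    have hn0 : ((n : ℂ)) ≠ 0 := by
      exact_mod_cast Nat.cast_ne_zero.mpr (by omega)
    rw [key n hn]
    field_simp
    ring
  have hzero : Tendsto (fun n : ℕ =>
      ((n : ℂ))⁻¹ * (-a - fderiv ℝ (fderiv ℝ (Rn n)) 0 u v)) atTop (𝓝 0) := by
    apply squeeze_zero_norm (a := fun n : ℕ => (‖a‖ + M) / n)
    · intro n
      rcases Nat.eq_zero_or_pos n with h0 | hpos
      · subst h0; simp
      · have hn : 1 ≤ n := hpos
        rw [norm_mul, norm_inv]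
        have h1 : ‖-a - fderiv ℝ (fderiv ℝ (Rn n)) 0 u v‖ ≤ ‖a‖ + M := by
          refine (norm_sub_le _ _).trans ?_
          rw [norm_neg]
          exact add_le_add le_rfl (hgb n hn)
        have h2 : ‖((n : ℂ))‖ = (n : ℝ) := by
          simp
        rw [h2, div_eq_inv_mul]
        have hn0 : (0 : ℝ) < (n : ℝ) := by exact_mod_cast hpos
        exact mul_le_mul_of_nonneg_left h1 (by positivity)
    · exact tendsto_const_div_atTop_nhds_zero_nat _
  have hsub : Tendsto (fun n : ℕ =>
      ((n : ℂ))⁻¹ * (∫ ω, ((S n ω j * S n ω k : ℝ) : ℂ) ∂ℙ) - (-c)) atTop (𝓝 0) :=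
    Tendsto.congr' (hdiffe.mono fun n h => h.symm) hzero
  have := hsub.add (tendsto_const_nhds (x := -c))
  simpa using this
end
end

section
/- Let V be a bounded open neighborhood of 0 in ℝ^d, let m ∈ ℕ*, and let w be a complex-valued function that is m-times continuously differentiable on an open set containing the closure of V. Assume there are constants c > 0 and D ≥ 0 such that for all x ∈ V: |w(x)| ≥ c‖x‖² and Σ_{j=1}^d |(∂_j w)(x)| ≤ D‖x‖. Then for every multi-index γ ∈ ℕ^d with |γ| ≤ m there is a constant C_γ ≥ 0 such that for all x ∈ V \ {0}: |∂^γ (1/w)(x)| ≤ C_γ / ‖x‖^{2+|γ|}. -/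
open MeasureTheory Filter Metric
open scoped Topology ENNReal NNReal BigOperators

noncomputable section

def pdd {d : ℕ} (j : Fin d) (f : Ed d → ℂ) : Ed d → ℂ :=
  fun y => fderiv ℝ f y (EuclideanSpace.single j 1)

def Dlist {d : ℕ} : List (Fin d) → (Ed d → ℂ) → (Ed d → ℂ)
  | [], f => f
  | j :: L, f => Dlist L (pdd j f)

lemma pdd_contDiffOn {d : ℕ} {s : Set (Ed d)} (hs : IsOpen s) {n : ℕ} {f : Ed d → ℂ}
    (hf : ContDiffOn ℝ (↑(n + 1)) f s) (j : Fin d) : ContDiffOn ℝ (↑n) (pdd j f) s := by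
  have h : ContDiffOn ℝ (↑n) (fderiv ℝ f) s := by
    apply hf.fderiv_of_isOpen hs
    exact_mod_cast le_rfl
  exact h.clm_apply contDiffOn_const

lemma Dlist_congr {d : ℕ} {s : Set (Ed d)} (hs : IsOpen s) :
    ∀ (L : List (Fin d)) {f g : Ed d → ℂ}, (∀ y ∈ s, f y = g y) →
      ∀ x ∈ s, Dlist L f x = Dlist L g x := by
  intro L
  induction L with
  | nil => intro f g h x hx; exact h x hx
  | cons j L IH =>
    intro f g h x hx
    refine IH (fun y hy => ?_) x hx
    show pdd j f y = pdd j g y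
    unfold pdd
    have hh : fderiv ℝ f y = fderiv ℝ g y :=
      Filter.EventuallyEq.fderiv_eq (Filter.eventuallyEq_of_mem (hs.mem_nhds hy) h)
    rw [hh]

lemma Dlist_add {d : ℕ} {s : Set (Ed d)} (hs : IsOpen s) :
    ∀ (L : List (Fin d)) {f g : Ed d → ℂ},
      ContDiffOn ℝ (↑L.length) f s → ContDiffOn ℝ (↑L.length) g s →
      ∀ x ∈ s, Dlist L (fun y => f y + g y) x = Dlist L f x + Dlist L g x := by
  intro L
  induction L with
  | nil => intro f g _ _ x _; rfl
  | cons j L IH =>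
    intro f g hf hg x hx
    have hcast : ((L.length + 1 : ℕ) : ℕ∞) = (L.length : ℕ∞) + 1 := by push_cast; rfl
    have hf' : ContDiffOn ℝ (↑(L.length + 1)) f s := by
      simpa [List.length_cons] using hf
    have hg' : ContDiffOn ℝ (↑(L.length + 1)) g s := by
      simpa [List.length_cons] using hg
    have h1 : ∀ y ∈ s, pdd j (fun y => f y + g y) y = pdd j f y + pdd j g y := by
      intro y hy
      have hdf : DifferentiableAt ℝ f y := by
        have := (hf'.differentiableOn (by simp)).differentiableAt (hs.mem_nhds hy)
        exact this
      have hdg : DifferentiableAt ℝ g y := by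
        exact (hg'.differentiableOn (by simp)).differentiableAt (hs.mem_nhds hy)
      show fderiv ℝ (fun y => f y + g y) y (EuclideanSpace.single j 1) = _
      rw [fderiv_fun_add hdf hdg]
      rfl
    calc Dlist (j :: L) (fun y => f y + g y) x
        = Dlist L (pdd j (fun y => f y + g y)) x := rfl
      _ = Dlist L (fun y => pdd j f y + pdd j g y) x := Dlist_congr hs L h1 x hx
      _ = Dlist L (pdd j f) x + Dlist L (pdd j g) x :=
          IH (pdd_contDiffOn hs hf' j) (pdd_contDiffOn hs hg' j) x hx
      _ = Dlist (j :: L) f x + Dlist (j :: L) g x := rfl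

lemma Dlist_const_mul {d : ℕ} {s : Set (Ed d)} (hs : IsOpen s) :
    ∀ (L : List (Fin d)) {f : Ed d → ℂ} (c : ℂ),
      ContDiffOn ℝ (↑L.length) f s →
      ∀ x ∈ s, Dlist L (fun y => c * f y) x = c * Dlist L f x := by
  intro L
  induction L with
  | nil => intro f c _ x _; rfl
  | cons j L IH =>
    intro f c hf x hx
    have hf' : ContDiffOn ℝ (↑(L.length + 1)) f s := by
      simpa [List.length_cons] using hf
    have h1 : ∀ y ∈ s, pdd j (fun y => c * f y) y = c * pdd j f y := by
      intro y hy
      have hdf : DifferentiableAt ℝ f y :=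
        (hf'.differentiableOn (by simp)).differentiableAt (hs.mem_nhds hy)
      show fderiv ℝ (fun y => c * f y) y (EuclideanSpace.single j 1) = _
      rw [fderiv_const_mul hdf]
      rfl
    calc Dlist (j :: L) (fun y => c * f y) x
        = Dlist L (pdd j (fun y => c * f y)) x := rfl
      _ = Dlist L (fun y => c * pdd j f y) x := Dlist_congr hs L h1 x hx
      _ = c * Dlist L (pdd j f) x := IH c (pdd_contDiffOn hs hf' j) x hx
      _ = c * Dlist (j :: L) f x := rfl

lemma Dlist_contDiffOn {d : ℕ} {s : Set (Ed d)} (hs : IsOpen s) :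
    ∀ (L : List (Fin d)) {i : ℕ} {f : Ed d → ℂ},
      ContDiffOn ℝ (↑(i + L.length)) f s → ContDiffOn ℝ (↑i) (Dlist L f) s := by
  intro L
  induction L with
  | nil => intro i f hf; simpa [Dlist] using hf
  | cons j L IH =>
    intro i f hf
    have hf' : ContDiffOn ℝ (↑((i + L.length) + 1)) f s := by
      have : (i + (j :: L).length) = (i + L.length) + 1 := by simp [List.length_cons]; ring
      rwa [this] at hf
    exact IH (pdd_contDiffOn hs hf' j)

lemma Dlist_leibniz_bound {d : ℕ} {s : Set (Ed d)} (hs : IsOpen s) :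
    ∀ (L : List (Fin d)) (f₁ f₂ : Ed d → ℂ) (a b : ℕ → Ed d → ℝ),
      ContDiffOn ℝ (↑L.length) f₁ s → ContDiffOn ℝ (↑L.length) f₂ s →
      (∀ L' : List (Fin d), L'.length ≤ L.length → ∀ x ∈ s,
        ‖Dlist L' f₁ x‖ ≤ a L'.length x) →
      (∀ L' : List (Fin d), L'.length ≤ L.length → ∀ x ∈ s,
        ‖Dlist L' f₂ x‖ ≤ b L'.length x) →
      (∀ i x, 0 ≤ a i x) → (∀ i x, 0 ≤ b i x) →
      ∀ x ∈ s, ‖Dlist L (fun y => f₁ y * f₂ y) x‖ ≤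
        2 ^ L.length * ∑ i ∈ Finset.range (L.length + 1), a i x * b (L.length - i) x := by
  intro L
  induction L with
  | nil =>
    intro f₁ f₂ a b _ _ ha hb _ _ x hx
    have h1 := ha [] (by simp) x hx
    have h2 := hb [] (by simp) x hx
    have : Dlist [] (fun y => f₁ y * f₂ y) x = f₁ x * f₂ x := rfl
    rw [this, norm_mul]
    simpa [Dlist] using mul_le_mul h1 h2 (norm_nonneg _) ((norm_nonneg _).trans h1)
  | cons j L IH =>
    intro f₁ f₂ a b hf₁ hf₂ ha hb ha0 hb0 x hx
    set n := L.length with hn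
    have hf₁' : ContDiffOn ℝ (↑(n + 1)) f₁ s := by simpa [List.length_cons] using hf₁
    have hf₂' : ContDiffOn ℝ (↑(n + 1)) f₂ s := by simpa [List.length_cons] using hf₂
    have h1 : ∀ y ∈ s, pdd j (fun y => f₁ y * f₂ y) y
        = pdd j f₁ y * f₂ y + f₁ y * pdd j f₂ y := by
      intro y hy
      have hdf : DifferentiableAt ℝ f₁ y :=
        (hf₁'.differentiableOn (by simp)).differentiableAt (hs.mem_nhds hy)
      have hdg : DifferentiableAt ℝ f₂ y :=
        (hf₂'.differentiableOn (by simp)).differentiableAt (hs.mem_nhds hy)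
      show fderiv ℝ (fun y => f₁ y * f₂ y) y (EuclideanSpace.single j 1) = _
      rw [fderiv_fun_mul hdf hdg]
      simp only [ContinuousLinearMap.add_apply, ContinuousLinearMap.smul_apply]
      show f₁ y • fderiv ℝ f₂ y (EuclideanSpace.single j 1)
          + f₂ y • fderiv ℝ f₁ y (EuclideanSpace.single j 1) = _
      simp only [smul_eq_mul, pdd]
      ring
    have hpf₁ : ContDiffOn ℝ (↑n) (pdd j f₁) s := pdd_contDiffOn hs hf₁' j
    have hpf₂ : ContDiffOn ℝ (↑n) (pdd j f₂) s := pdd_contDiffOn hs hf₂' j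
    have hf₁n : ContDiffOn ℝ (↑n) f₁ s := hf₁'.of_le (by exact_mod_cast Nat.le_succ n)
    have hf₂n : ContDiffOn ℝ (↑n) f₂ s := hf₂'.of_le (by exact_mod_cast Nat.le_succ n)
    have key : Dlist (j :: L) (fun y => f₁ y * f₂ y) x
        = Dlist L (fun y => pdd j f₁ y * f₂ y) x + Dlist L (fun y => f₁ y * pdd j f₂ y) x := by
      calc Dlist (j :: L) (fun y => f₁ y * f₂ y) x
          = Dlist L (pdd j (fun y => f₁ y * f₂ y)) x := rfl
        _ = Dlist L (fun y => pdd j f₁ y * f₂ y + f₁ y * pdd j f₂ y) x :=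
            Dlist_congr hs L h1 x hx
        _ = _ := Dlist_add hs L (hpf₁.mul hf₂n) (hf₁n.mul hpf₂) x hx
    have hA : ‖Dlist L (fun y => pdd j f₁ y * f₂ y) x‖ ≤
        2 ^ n * ∑ i ∈ Finset.range (n + 1), a (i + 1) x * b (n - i) x := by
      refine IH (pdd j f₁) f₂ (fun i => a (i + 1)) b hpf₁ hf₂n ?_ ?_ (fun i x => ha0 _ x) hb0 x hx
      · intro L' hL' y hy
        have : Dlist L' (pdd j f₁) = Dlist (j :: L') f₁ := rfl
        rw [this]
        simpa using ha (j :: L') (by simpa using Nat.succ_le_succ hL') y hy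
      · intro L' hL' y hy
        exact hb L' (hL'.trans (Nat.le_succ n)) y hy
    have hB : ‖Dlist L (fun y => f₁ y * pdd j f₂ y) x‖ ≤
        2 ^ n * ∑ i ∈ Finset.range (n + 1), a i x * b (n - i + 1) x := by
      refine IH f₁ (pdd j f₂) a (fun i => b (i + 1)) hf₁n hpf₂ ?_ ?_ ha0 (fun i x => hb0 _ x) x hx
      · intro L' hL' y hy
        exact ha L' (hL'.trans (Nat.le_succ n)) y hy
      · intro L' hL' y hy
        have : Dlist L' (pdd j f₂) = Dlist (j :: L') f₂ := rfl
        rw [this]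
        simpa using hb (j :: L') (by simpa using Nat.succ_le_succ hL') y hy
    have hlen : (j :: L).length = n + 1 := by simp [List.length_cons, hn]
    rw [key, hlen]
    have hS : ∀ T ∈ Finset.range (n + 2), (0:ℝ) ≤ a T x * b (n + 1 - T) x :=
      fun T _ => mul_nonneg (ha0 _ _) (hb0 _ _)
    set S := ∑ i ∈ Finset.range (n + 2), a i x * b (n + 1 - i) x with hSdef
    have hSA : ∑ i ∈ Finset.range (n + 1), a (i + 1) x * b (n - i) x ≤ S := by
      have : S = ∑ i ∈ Finset.range (n + 1), a (i + 1) x * b (n + 1 - (i + 1)) x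
          + a 0 x * b (n + 1 - 0) x := Finset.sum_range_succ' _ _
      rw [this]
      have he : ∀ i ∈ Finset.range (n + 1), a (i + 1) x * b (n - i) x
          = a (i + 1) x * b (n + 1 - (i + 1)) x := by
        intro i hi
        congr 2
        omega
      rw [Finset.sum_congr rfl he]
      exact le_add_of_nonneg_right (mul_nonneg (ha0 _ _) (hb0 _ _))
    have hSB : ∑ i ∈ Finset.range (n + 1), a i x * b (n - i + 1) x ≤ S := by
      have : S = ∑ i ∈ Finset.range (n + 1), a i x * b (n + 1 - i) x
          + a (n + 1) x * b (n + 1 - (n + 1)) x := Finset.sum_range_succ _ _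
      rw [this]
      have he : ∀ i ∈ Finset.range (n + 1), a i x * b (n - i + 1) x
          = a i x * b (n + 1 - i) x := by
        intro i hi
        simp only [Finset.mem_range] at hi
        congr 2
        omega
      rw [Finset.sum_congr rfl he]
      exact le_add_of_nonneg_right (mul_nonneg (ha0 _ _) (hb0 _ _))
    calc ‖Dlist L (fun y => pdd j f₁ y * f₂ y) x
            + Dlist L (fun y => f₁ y * pdd j f₂ y) x‖
        ≤ ‖Dlist L (fun y => pdd j f₁ y * f₂ y) x‖
          + ‖Dlist L (fun y => f₁ y * pdd j f₂ y) x‖ := norm_add_le _ _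
      _ ≤ 2 ^ n * ∑ i ∈ Finset.range (n + 1), a (i + 1) x * b (n - i) x
          + 2 ^ n * ∑ i ∈ Finset.range (n + 1), a i x * b (n - i + 1) x := add_le_add hA hB
      _ ≤ 2 ^ n * S + 2 ^ n * S :=
          add_le_add (mul_le_mul_of_nonneg_left hSA (by positivity))
            (mul_le_mul_of_nonneg_left hSB (by positivity))
      _ = 2 ^ (n + 1) * S := by ring

lemma Dlist_eq_iteratedFDeriv {d : ℕ} {s : Set (Ed d)} (hs : IsOpen s) :
    ∀ (n : ℕ) (f : Ed d → ℂ), ContDiffOn ℝ (↑n) f s → ∀ x ∈ s, ∀ ι : Fin n → Fin d,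
      iteratedFDeriv ℝ n f x (fun i => EuclideanSpace.single (ι i) 1)
        = Dlist ((List.ofFn ι).reverse) f x := by
  intro n
  induction n with
  | zero =>
    intro f _ x _ ι
    simp [Dlist]
  | succ n IH =>
    intro f hf x hx ι
    set j := ι (Fin.last n) with hj
    set v := EuclideanSpace.single j (1 : ℝ) with hv
    have hfd : ContDiffOn ℝ (↑n) (fderiv ℝ f) s :=
      hf.fderiv_of_isOpen hs (by exact_mod_cast le_rfl)
    set M : Fin n → Ed d := Fin.init (fun i => EuclideanSpace.single (ι i) 1) with hM
    have step1 : iteratedFDeriv ℝ (n + 1) f x (fun i => EuclideanSpace.single (ι i) 1)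
        = iteratedFDeriv ℝ n (fderiv ℝ f) x M v := iteratedFDeriv_succ_apply_right _
    set A : (Ed d →L[ℝ] ℂ) →L[ℝ] ℂ := ContinuousLinearMap.apply ℝ ℂ v with hA
    have step2 : iteratedFDeriv ℝ n (fderiv ℝ f) x M v
        = iteratedFDeriv ℝ n (pdd j f) x M := by
      have e1 : iteratedFDeriv ℝ n (fderiv ℝ f) x = iteratedFDerivWithin ℝ n (fderiv ℝ f) s x :=
        (iteratedFDerivWithin_of_isOpen n hs hx).symm
      have e2 : iteratedFDerivWithin ℝ n (A ∘ fderiv ℝ f) s x =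
          A.compContinuousMultilinearMap (iteratedFDerivWithin ℝ n (fderiv ℝ f) s x) :=
        A.iteratedFDerivWithin_comp_left (hfd x hx) hs.uniqueDiffOn hx le_rfl
      have e3 : (A ∘ fderiv ℝ f) = pdd j f := by
        funext y
        simp [hA, pdd, ContinuousLinearMap.apply_apply, hv]
      have e4 : iteratedFDerivWithin ℝ n (pdd j f) s x = iteratedFDeriv ℝ n (pdd j f) x :=
        iteratedFDerivWithin_of_isOpen n hs hx
      calc iteratedFDeriv ℝ n (fderiv ℝ f) x M v
          = A (iteratedFDerivWithin ℝ n (fderiv ℝ f) s x M) := by rw [e1]; rfl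
        _ = (A.compContinuousMultilinearMap (iteratedFDerivWithin ℝ n (fderiv ℝ f) s x)) M := rfl
        _ = iteratedFDerivWithin ℝ n (A ∘ fderiv ℝ f) s x M := by rw [e2]
        _ = iteratedFDeriv ℝ n (pdd j f) x M := by rw [e3, e4]
    have hpd : ContDiffOn ℝ (↑n) (pdd j f) s := pdd_contDiffOn hs (by exact_mod_cast hf) j
    have hMeq : M = fun i : Fin n => EuclideanSpace.single ((ι ∘ Fin.castSucc) i) 1 := by
      funext i
      simp [hM, Fin.init]
    have step3 : iteratedFDeriv ℝ n (pdd j f) x M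
        = Dlist ((List.ofFn (ι ∘ Fin.castSucc)).reverse) (pdd j f) x := by
      rw [hMeq]
      exact IH (pdd j f) hpd x hx (ι ∘ Fin.castSucc)
    have hlist : ((List.ofFn ι).reverse) = j :: (List.ofFn (ι ∘ Fin.castSucc)).reverse := by
      rw [List.ofFn_succ' ι, List.concat_eq_append, List.reverse_append]
      rfl
    rw [step1, step2, step3, hlist]
    rfl

/-- **Proposition A.0: bounds for the partial derivatives of `1/w`.** -/
theorem inv_w_derivative_bounds
    {d : ℕ} (m : ℕ) (hm : 1 ≤ m)
    (V : Set (Ed d)) (hVopen : IsOpen V) (hVbdd : Bornology.IsBounded V) (hV0 : (0 : Ed d) ∈ V)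
    (U : Set (Ed d)) (hUopen : IsOpen U) (hVU : closure V ⊆ U)
    (w : Ed d → ℂ) (hw : ContDiffOn ℝ (m : ℕ∞) w U)
    (c : ℝ) (hc : 0 < c) (D : ℝ) (hD : 0 ≤ D)
    (hlow : ∀ x ∈ V, c * ‖x‖ ^ 2 ≤ ‖w x‖)
    (hgrad : ∀ x ∈ V,
      ∑ j : Fin d, ‖fderiv ℝ w x (EuclideanSpace.single j 1)‖ ≤ D * ‖x‖) :
    ∀ k : ℕ, k ≤ m → ∀ ι : Fin k → Fin d, ∃ C : ℝ, 0 ≤ C ∧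
      ∀ x ∈ V, x ≠ 0 →
        ‖iteratedFDeriv ℝ k (fun y => (w y)⁻¹) x
          (fun i => EuclideanSpace.single (ι i) 1)‖ ≤ C / ‖x‖ ^ (2 + k) := by
  set Ω : Set (Ed d) := V \ {0} with hΩdef
  have hΩopen : IsOpen Ω := hVopen.sdiff isClosed_singleton
  have hΩV : Ω ⊆ V := Set.diff_subset
  have hVUsub : V ⊆ U := subset_closure.trans hVU
  have hΩU : Ω ⊆ U := hΩV.trans hVUsub
  have hxne : ∀ x ∈ Ω, x ≠ 0 := by
    intro x hx h
    exact hx.2 (by simp [h])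
  have hwne : ∀ x ∈ Ω, w x ≠ 0 := by
    intro x hx h
    have h1 := hlow x hx.1
    have hx0 : (0:ℝ) < ‖x‖ := norm_pos_iff.mpr (hxne x hx)
    rw [h] at h1
    simp only [norm_zero] at h1
    have := mul_pos hc (pow_pos hx0 2)
    linarith
  have hwm : ∀ k : ℕ, k ≤ m → ContDiffOn ℝ (↑k) w U := fun k hk =>
    hw.of_le (by exact_mod_cast hk)
  have hgC : ContDiffOn ℝ (↑m : ℕ∞) (fun y => (w y)⁻¹) Ω := (hw.mono hΩU).inv hwne
  -- radius bound
  obtain ⟨R, hR⟩ := isBounded_iff_forall_norm_le.1 hVbdd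
  set R' : ℝ := max 1 R with hR'def
  have hR'1 : (1:ℝ) ≤ R' := le_max_left _ _
  have hR'0 : (0:ℝ) ≤ R' := zero_le_one.trans hR'1
  have hxR' : ∀ x ∈ V, ‖x‖ ≤ R' := fun x hx => (hR x hx).trans (le_max_right _ _)
  -- compactness bounds for derivatives of w
  have hK : IsCompact (closure V) := hVbdd.isCompact_closure
  have hKne : (closure V).Nonempty := ⟨0, subset_closure hV0⟩
  have hMwE : ∀ n : ℕ, ∃ Mn : ℝ, 0 ≤ Mn ∧ (n ≤ m → ∀ L : List (Fin d), L.length = n →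
      ∀ x ∈ closure V, ‖Dlist L w x‖ ≤ Mn) := by
    intro n
    by_cases hnm : n ≤ m
    · set F : Ed d → ℝ := fun x => ∑ t : Fin n → Fin d, ‖Dlist (List.ofFn t) w x‖
        with hF
      have hFc : ContinuousOn F U := by
        apply continuousOn_finset_sum
        intro t _
        have h1 : ContDiffOn ℝ (↑(0 : ℕ)) (Dlist (List.ofFn t) w) U := by
          apply Dlist_contDiffOn hUopen
          have : (0 + (List.ofFn t).length) = n := by simp
          rw [this]
          exact hwm n hnm
        exact continuous_norm.comp_continuousOn (by exact_mod_cast h1.continuousOn)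
      obtain ⟨z, hz, hzmax⟩ := hK.exists_isMaxOn hKne (hFc.mono hVU)
      refine ⟨F z, Finset.sum_nonneg fun t _ => norm_nonneg _, ?_⟩
      intro _ L hL x hx
      subst hL
      have h1 : ‖Dlist L w x‖ ≤ F x := by
        have h2 := List.ofFn_get L
        calc ‖Dlist L w x‖
            = ‖Dlist (List.ofFn L.get) w x‖ := by rw [h2]
          _ ≤ F x := Finset.single_le_sum (f := fun t : Fin L.length → Fin d =>
              ‖Dlist (List.ofFn t) w x‖)
              (fun t _ => norm_nonneg _) (Finset.mem_univ L.get)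
      exact h1.trans (hzmax hx)
    · exact ⟨0, le_rfl, fun h => absurd h hnm⟩
  choose Mw hMw0 hMwB using hMwE
  have hpdw : ∀ (j : Fin d), ∀ x ∈ V, ‖pdd j w x‖ ≤ D * ‖x‖ := by
    intro j x hx
    refine le_trans ?_ (hgrad x hx)
    exact Finset.single_le_sum
      (f := fun j' : Fin d => ‖fderiv ℝ w x (EuclideanSpace.single j' 1)‖)
      (fun i _ => norm_nonneg _) (Finset.mem_univ j)
  -- main induction
  have main : ∀ k : ℕ, k ≤ m → ∀ p : ℕ, 1 ≤ p → ∃ C : ℝ, 0 ≤ C ∧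
      ∀ L : List (Fin d), L.length = k → ∀ x ∈ Ω,
        ‖Dlist L (fun y => (w y)⁻¹ ^ p) x‖ ≤ C / ‖x‖ ^ (2 * p + k) := by
    intro k
    induction k using Nat.strong_induction_on with
    | _ k IH =>
      intro hk p hp
      cases k with
      | zero =>
        refine ⟨(1 / c) ^ p, by positivity, ?_⟩
        intro L hL x hx
        have hnx : (0:ℝ) < ‖x‖ := norm_pos_iff.mpr (hxne x hx)
        have hL0 : L = [] := List.length_eq_zero_iff.mp hL
        subst hL0
        have hval : Dlist ([] : List (Fin d)) (fun y => (w y)⁻¹ ^ p) x = (w x)⁻¹ ^ p := rfl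
        rw [hval, norm_pow, norm_inv]
        have hwx : c * ‖x‖ ^ 2 ≤ ‖w x‖ := hlow x hx.1
        have h2 : (0:ℝ) < c * ‖x‖ ^ 2 := by positivity
        have h3 : (‖w x‖)⁻¹ ≤ (c * ‖x‖ ^ 2)⁻¹ := by
          apply inv_anti₀ h2 hwx
        have h4 : (‖w x‖)⁻¹ ^ p ≤ ((c * ‖x‖ ^ 2)⁻¹) ^ p :=
          pow_le_pow_left₀ (by positivity) h3 p
        refine h4.trans (le_of_eq ?_)
        have hcne : c ≠ 0 := hc.ne'
        have hxne2 : ‖x‖ ≠ 0 := hnx.ne'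
        rw [Nat.add_zero, pow_mul, ← div_pow]
        congr 1
        rw [one_div, div_eq_mul_inv, ← mul_inv]
      | succ k =>
        have hIHe : ∀ i : ℕ, ∃ C : ℝ, 0 ≤ C ∧ (i ≤ k → ∀ L : List (Fin d), L.length = i →
            ∀ x ∈ Ω, ‖Dlist L (fun y => (w y)⁻¹ ^ (p + 1)) x‖
              ≤ C / ‖x‖ ^ (2 * (p + 1) + i)) := by
          intro i
          by_cases hik : i ≤ k
          · obtain ⟨C, hC0, hC⟩ := IH i (by omega) (by omega) (p + 1) (by omega)
            exact ⟨C, hC0, fun _ => hC⟩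
          · exact ⟨0, le_rfl, fun h => absurd h hik⟩
        choose Ci hCi0 hCi using hIHe
        set coef : ℕ → ℝ := fun i =>
          Ci i * (if i = k then D else Mw (k - i + 1)) * R' ^ (k - 1 - i) with hcoef
        have hcoef0 : ∀ i, 0 ≤ coef i := by
          intro i
          apply mul_nonneg (mul_nonneg (hCi0 i) ?_) (pow_nonneg hR'0 _)
          rcases eq_or_ne i k with h | h
          · rw [if_pos h]; exact hD
          · rw [if_neg h]; exact hMw0 _
        refine ⟨(p : ℝ) * 2 ^ k * ∑ i ∈ Finset.range (k + 1), coef i, ?_, ?_⟩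
        · have : (0:ℝ) ≤ ∑ i ∈ Finset.range (k + 1), coef i :=
            Finset.sum_nonneg fun i _ => hcoef0 i
          positivity
        intro L hL x hx
        have hxV : x ∈ V := hx.1
        have hnx : (0:ℝ) < ‖x‖ := norm_pos_iff.mpr (hxne x hx)
        have hnxne : ‖x‖ ≠ 0 := hnx.ne'
        obtain ⟨j, L', rfl⟩ : ∃ j L'', L = j :: L'' := by
          cases L with
          | nil => simp at hL
          | cons a b => exact ⟨a, b, rfl⟩
        have hL' : L'.length = k := by simpa using hL
        -- derivative identity
        have hkey : ∀ y ∈ Ω, pdd j (fun z => (w z)⁻¹ ^ p) y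
            = (-(p : ℂ)) * ((fun z => (w z)⁻¹ ^ (p + 1) * pdd j w z) y) := by
          intro y hy
          have hyU : y ∈ U := hΩU hy
          have hwy : w y ≠ 0 := hwne y hy
          have hdw : DifferentiableAt ℝ w y :=
            ((hw.differentiableOn (by exact_mod_cast (show m ≠ 0 by omega))).differentiableAt
              (hUopen.mem_nhds hyU))
          have h1 : HasFDerivAt w (fderiv ℝ w y) y := hdw.hasFDerivAt
          have h2 : HasDerivAt (fun z : ℂ => z⁻¹ ^ p)
              ((p : ℂ) * (w y)⁻¹ ^ (p - 1) * (-((w y) ^ 2)⁻¹)) (w y) :=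
            (hasDerivAt_inv hwy).pow p
          have h3 : HasFDerivAt (fun z => (w z)⁻¹ ^ p)
              (((p : ℂ) * (w y)⁻¹ ^ (p - 1) * (-((w y) ^ 2)⁻¹)) • fderiv ℝ w y) y :=
            h2.comp_hasFDerivAt y h1
          show fderiv ℝ (fun z => (w z)⁻¹ ^ p) y (EuclideanSpace.single j 1) = _
          rw [h3.fderiv]
          simp only [ContinuousLinearMap.smul_apply, smul_eq_mul]
          have hpow : (w y)⁻¹ ^ (p - 1) * ((w y) ^ 2)⁻¹ = (w y)⁻¹ ^ (p + 1) := by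
            rw [← inv_pow, ← pow_add]
            congr 1
            omega
          have h5 : ((p : ℂ) * (w y)⁻¹ ^ (p - 1) * (-((w y) ^ 2)⁻¹))
              = -(p : ℂ) * (w y)⁻¹ ^ (p + 1) := by
            rw [← hpow]; ring
          rw [h5]
          show -(p:ℂ) * (w y)⁻¹ ^ (p+1) * (fderiv ℝ w y (EuclideanSpace.single j 1)) = _
          show -(p:ℂ) * (w y)⁻¹ ^ (p+1) * pdd j w y = -(p:ℂ) * ((w y)⁻¹ ^ (p+1) * pdd j w y)
          ring
        have hgsm : ∀ q : ℕ, ContDiffOn ℝ (↑k) (fun z => (w z)⁻¹ ^ q) Ω := fun q =>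
          (((hw.mono hΩU).inv hwne).pow q).of_le (by exact_mod_cast Nat.le_of_succ_le hk)
        have hpdwΩ : ContDiffOn ℝ (↑k) (pdd j w) Ω :=
          (pdd_contDiffOn hUopen (hwm (k + 1) hk) j).mono hΩU
        have hprod : ContDiffOn ℝ (↑k) (fun z => (w z)⁻¹ ^ (p + 1) * pdd j w z) Ω :=
          (hgsm (p + 1)).mul hpdwΩ
        have e1 : Dlist (j :: L') (fun y => (w y)⁻¹ ^ p) x
            = (-(p : ℂ)) * Dlist L' (fun z => (w z)⁻¹ ^ (p + 1) * pdd j w z) x := by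
          calc Dlist (j :: L') (fun y => (w y)⁻¹ ^ p) x
              = Dlist L' (pdd j (fun y => (w y)⁻¹ ^ p)) x := rfl
            _ = Dlist L' (fun y => (-(p : ℂ)) * ((w y)⁻¹ ^ (p + 1) * pdd j w y)) x :=
                Dlist_congr hΩopen L' hkey x hx
            _ = _ := Dlist_const_mul hΩopen L' _ (by rw [hL']; exact hprod) x hx
        -- Leibniz bound
        set a : ℕ → Ed d → ℝ := fun i y => Ci i / ‖y‖ ^ (2 * (p + 1) + i) with ha
        set b : ℕ → Ed d → ℝ := fun i y => if i = 0 then D * ‖y‖ else Mw (i + 1) with hb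
        have ha0 : ∀ i y, 0 ≤ a i y := fun i y =>
          div_nonneg (hCi0 i) (pow_nonneg (norm_nonneg _) _)
        have hb0 : ∀ i y, 0 ≤ b i y := by
          intro i y
          simp only [hb]
          split
          · exact mul_nonneg hD (norm_nonneg _)
          · exact hMw0 _
        have hbound := Dlist_leibniz_bound hΩopen L' (fun z => (w z)⁻¹ ^ (p + 1)) (pdd j w) a b
          (by rw [hL']; exact hgsm (p + 1)) (by rw [hL']; exact hpdwΩ)
          (by
            intro L'' hlen y hy
            rw [hL'] at hlen
            exact hCi L''.length hlen L'' rfl y hy)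
          (by
            intro L'' hlen y hy
            rw [hL'] at hlen
            have hDl : Dlist L'' (pdd j w) = Dlist (j :: L'') w := rfl
            rw [hDl]
            rcases eq_or_ne L''.length 0 with h0 | h0
            · have hLnil : L'' = [] := List.length_eq_zero_iff.mp h0
              subst hLnil
              simp only [hb, List.length_nil, if_pos]
              exact hpdw j y hy.1
            · simp only [hb]
              rw [if_neg h0]
              exact hMwB (L''.length + 1) (by omega) (j :: L'') (by simp) y
                (subset_closure hy.1))
          ha0 hb0 x hx
        rw [hL'] at hbound
        -- per-term estimates
        have hterm : ∀ i ∈ Finset.range (k + 1),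
            a i x * b (k - i) x ≤ coef i / ‖x‖ ^ (2 * p + (k + 1)) := by
          intro i hi
          simp only [Finset.mem_range] at hi
          rcases eq_or_ne i k with hik | hik
          · have h0 : k - i = 0 := by omega
            have hb0' : b (k - i) x = D * ‖x‖ := by
              simp only [hb, h0, if_pos]
            have hcoefi : coef i = Ci i * D := by
              simp only [hcoef]
              rw [if_pos hik]
              have h1 : k - 1 - i = 0 := by omega
              rw [h1, pow_zero, mul_one]
            rw [hb0', hcoefi]
            simp only [ha]
            rw [div_mul_eq_mul_div]
            rw [div_le_div_iff₀ (by positivity) (by positivity)]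
            have hsplit : ‖x‖ ^ (2 * (p + 1) + i) = ‖x‖ ^ (2 * p + (k + 1)) * ‖x‖ := by
              rw [← pow_succ]
              congr 1
              omega
            rw [hsplit]
            exact le_of_eq (by ring)
          · have hik' : i < k := by omega
            have he0 : k - i ≠ 0 := by omega
            have hbne : b (k - i) x = Mw (k - i + 1) := by
              simp only [hb]
              rw [if_neg he0]
            have hcoefi : coef i = Ci i * Mw (k - i + 1) * R' ^ (k - 1 - i) := by
              simp only [hcoef]
              rw [if_neg hik]
            rw [hbne, hcoefi]
            simp only [ha]
            rw [div_mul_eq_mul_div]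
            rw [div_le_div_iff₀ (by positivity) (by positivity)]
            have hsplit : ‖x‖ ^ (2 * p + (k + 1))
                = ‖x‖ ^ (2 * (p + 1) + i) * ‖x‖ ^ (k - 1 - i) := by
              rw [← pow_add]
              congr 1
              omega
            rw [hsplit]
            have hxb : ‖x‖ ^ (k - 1 - i) ≤ R' ^ (k - 1 - i) :=
              pow_le_pow_left₀ (norm_nonneg _) (hxR' x hxV) _
            calc Ci i * Mw (k - i + 1) * (‖x‖ ^ (2 * (p + 1) + i) * ‖x‖ ^ (k - 1 - i))
                = (Ci i * Mw (k - i + 1) * ‖x‖ ^ (2 * (p + 1) + i)) * ‖x‖ ^ (k - 1 - i) := by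
                  ring
              _ ≤ (Ci i * Mw (k - i + 1) * ‖x‖ ^ (2 * (p + 1) + i)) * R' ^ (k - 1 - i) := by
                  exact mul_le_mul_of_nonneg_left hxb
                    (mul_nonneg (mul_nonneg (hCi0 i) (hMw0 _)) (pow_nonneg (norm_nonneg _) _))
              _ = Ci i * Mw (k - i + 1) * R' ^ (k - 1 - i) * ‖x‖ ^ (2 * (p + 1) + i) := by
                  ring
        have hsum : ∑ i ∈ Finset.range (k + 1), a i x * b (k - i) x
            ≤ (∑ i ∈ Finset.range (k + 1), coef i) / ‖x‖ ^ (2 * p + (k + 1)) := by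
          rw [Finset.sum_div]
          exact Finset.sum_le_sum hterm
        rw [e1, norm_mul]
        have habs : ‖-(p : ℂ)‖ = (p : ℝ) := by
          simp
        rw [habs]
        calc (p:ℝ) * ‖Dlist L' (fun z => (w z)⁻¹ ^ (p + 1) * pdd j w z) x‖
            ≤ (p:ℝ) * (2 ^ k * ∑ i ∈ Finset.range (k + 1), a i x * b (k - i) x) := by
              exact mul_le_mul_of_nonneg_left hbound (by positivity)
          _ ≤ (p:ℝ) * (2 ^ k * ((∑ i ∈ Finset.range (k + 1), coef i)
                / ‖x‖ ^ (2 * p + (k + 1)))) := by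
              apply mul_le_mul_of_nonneg_left _ (by positivity)
              apply mul_le_mul_of_nonneg_left hsum (by positivity)
          _ = (p:ℝ) * 2 ^ k * (∑ i ∈ Finset.range (k + 1), coef i)
                / ‖x‖ ^ (2 * p + (k + 1)) := by ring
  -- conclusion
  intro k hk ι
  obtain ⟨C, hC0, hC⟩ := main k hk 1 le_rfl
  refine ⟨C, hC0, ?_⟩
  intro x hxV hx0
  have hx : x ∈ Ω := ⟨hxV, by simp [hx0]⟩
  have hgk : ContDiffOn ℝ (↑k) (fun y => (w y)⁻¹) Ω := hgC.of_le (by exact_mod_cast hk)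
  have hb := Dlist_eq_iteratedFDeriv hΩopen k (fun y => (w y)⁻¹) hgk x hx ι
  rw [hb]
  have h1 := hC ((List.ofFn ι).reverse) (by simp) x hx
  have heq : (fun y => (w y)⁻¹ ^ 1) = (fun y : Ed d => (w y)⁻¹) := by
    funext y; rw [pow_one]
  rw [heq] at h1
  have : 2 * 1 + k = 2 + k := by ring
  rwa [this] at h1
end
end
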